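/- Under the Hoeffding decomposition of the U-statistic U_n with symmetric kernel g_{y,h}, its first projection is g_{y,h,1}(x₁) = E[g_{y,h}(x₁, Z)] − Θ, with Z ∼ μ and Θ = E[g_{y,h}(Z₁, Z₂)], and explicitly g_{y,h,1}(x₁) = (1/(2h))·K((d²(x₁)−y)/h) − Θ/2 + E_Z[(1/(2mh²))·K'((d²(Z)−y)/h)·Ψ(x₁, Z)], where Ψ(x₁, x₂) = min(‖x₁−x₂‖², F_{x₂}^{-1}(m)) − E_{Z'}[min(‖Z'−x₂‖², F_{x₂}^{-1}(m))]. -/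

import Mathlib

open MeasureTheory Set
open scoped ENNReal

lemma aux_ind_intble (r a b : ℝ) :
    IntervalIntegrable (fun t => if r ≤ t then (1:ℝ) else 0) MeasureTheory.volume a b := by
  apply Monotone.intervalIntegrable
  intro s t hst
  by_cases hs : r ≤ s
  · simp [hs, hs.trans hst]
  · by_cases ht : r ≤ t <;> simp [hs, ht]

lemma aux_ind_int (r c : ℝ) (hr : 0 ≤ r) (hc : 0 ≤ c) :
    ∫ t in (0:ℝ)..c, (if r ≤ t then (1:ℝ) else 0) = c - min r c := by
  rcases le_or_gt r c with hrc | hrc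
  · rw [← intervalIntegral.integral_add_adjacent_intervals (aux_ind_intble r 0 r)
      (aux_ind_intble r r c)]
    have h1 : (∫ t in (0:ℝ)..r, (if r ≤ t then (1:ℝ) else 0)) = 0 := by
      have hae : ∀ᵐ t ∂(volume : Measure ℝ), t ≠ r := by
        rw [ae_iff]; simpa using measure_singleton r
      rw [intervalIntegral.integral_congr_ae (g := fun _ => (0:ℝ)) ?_,
        intervalIntegral.integral_zero]
      filter_upwards [hae] with t ht hmem
      rw [Set.uIoc_of_le hr] at hmem
      have : ¬ r ≤ t := fun hle => ht (le_antisymm hmem.2 hle)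
      simp [this]
    have h2 : (∫ t in r..c, (if r ≤ t then (1:ℝ) else 0)) = c - r := by
      rw [intervalIntegral.integral_congr (g := fun _ => (1:ℝ)) ?_,
        intervalIntegral.integral_const]
      · simp
      · intro t ht
        rw [Set.uIcc_of_le hrc] at ht
        simp [ht.1]
    rw [h1, h2, min_eq_left hrc]; ring
  · have hcong : EqOn (fun t => if r ≤ t then (1:ℝ) else 0) (fun _ => (0:ℝ)) (Set.uIcc 0 c) := by
      intro t ht
      rw [Set.uIcc_of_le hc] at ht
      have : ¬ r ≤ t := by linarith [ht.2]
      simp [this]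
    rw [intervalIntegral.integral_congr hcong, intervalIntegral.integral_zero,
      min_eq_right hrc.le]; ring

theorem aux_main {X : Type*} [NormedAddCommGroup X] [MeasurableSpace X] [BorelSpace X]
    [SecondCountableTopology X]
    (𝒳 : Set X) (h𝒳 : IsCompact 𝒳)
    (μ : Measure X) [IsProbabilityMeasure μ]
    (hsupp : μ 𝒳 = 1) (m : ℝ) (hm0 : 0 < m) (hm1 : m ≤ 1) (y h : ℝ) (hh : 0 < h)
    (F : X → ℝ → ℝ)
    (hF : ∀ x t, F x t = (μ {z | ‖z - x‖ ^ 2 ≤ t}).toReal)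
    (Finv : X → ℝ → ℝ)
    (hFinv : ∀ x u, Finv x u = sInf {t : ℝ | u ≤ F x t})
    (d2 : X → ℝ)
    (hd2 : ∀ x, d2 x = (1 / m) * ∫ u in (0:ℝ)..m, Finv x u)
    (K K' : ℝ → ℝ) (hKC2 : ContDiff ℝ 2 K) (hK' : ∀ t, HasDerivAt K (K' t) t)
    (hKsupp : tsupport K = Set.Icc (-1:ℝ) 1)
    (g : X → X → ℝ)
    (hg : ∀ x₁ x₂, g x₁ x₂ =
      (1 / (2 * h)) * (K ((d2 x₁ - y) / h) + K ((d2 x₂ - y) / h)) +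
      (1 / (2 * m * h ^ 2)) *
        (K' ((d2 x₁ - y) / h) *
            (∫ t in (0:ℝ)..(Finv x₁ m),
              (F x₁ t - if ‖x₁ - x₂‖ ^ 2 ≤ t then (1:ℝ) else 0)) +
          K' ((d2 x₂ - y) / h) *
            (∫ t in (0:ℝ)..(Finv x₂ m),
              (F x₂ t - if ‖x₁ - x₂‖ ^ 2 ≤ t then (1:ℝ) else 0))))
    (Θ : ℝ) (hΘ : Θ = ∫ z₁, ∫ z₂, g z₁ z₂ ∂μ ∂μ)
    (Ψ : X → X → ℝ)
    (hΨ : ∀ x₁ x₂, Ψ x₁ x₂ =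
      min (‖x₁ - x₂‖ ^ 2) (Finv x₂ m) - ∫ z, min (‖z - x₂‖ ^ 2) (Finv x₂ m) ∂μ) :
    ∀ x₁, (∫ z, g x₁ z ∂μ) - Θ =
      (1 / (2 * h)) * K ((d2 x₁ - y) / h) - Θ / 2 +
        ∫ z, (1 / (2 * m * h ^ 2)) * K' ((d2 z - y) / h) * Ψ x₁ z ∂μ := by
  -- measurability of the balls
  have hAms : ∀ (x : X) (t : ℝ), MeasurableSet {z : X | ‖z - x‖ ^ 2 ≤ t} := fun x t =>
    measurableSet_le (((continuous_id.sub continuous_const).norm.pow 2).measurable)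
      measurable_const
  -- basic facts about F
  have hFmono : ∀ x : X, Monotone (F x) := by
    intro x a b hab
    rw [hF, hF]
    exact ENNReal.toReal_mono (measure_ne_top μ _)
      (measure_mono fun z hz => le_trans hz hab)
  have hF0 : ∀ (x : X) (t : ℝ), 0 ≤ F x t := fun x t => by rw [hF]; exact ENNReal.toReal_nonneg
  have hF1 : ∀ (x : X) (t : ℝ), F x t ≤ 1 := by
    intro x t
    rw [hF]
    have : μ {z | ‖z - x‖ ^ 2 ≤ t} ≤ 1 := le_of_le_of_eq (measure_mono (subset_univ _))
      measure_univ
    simpa using ENNReal.toReal_mono (by simp) this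
  have hFneg : ∀ (x : X) (t : ℝ), t < 0 → F x t = 0 := by
    intro x t ht
    rw [hF]
    have : {z : X | ‖z - x‖ ^ 2 ≤ t} = ∅ := by
      ext z
      simp only [mem_setOf_eq, mem_empty_iff_false, iff_false, not_le]
      exact lt_of_lt_of_le ht (by positivity)
    simp [this]
  -- bounded support
  obtain ⟨r, hr⟩ := h𝒳.isBounded.subset_closedBall 0
  have h𝒳ne : 𝒳.Nonempty := by
    rcases Set.eq_empty_or_nonempty 𝒳 with h | h
    · exfalso; rw [h] at hsupp; simp at hsupp
    · exact h
  have hr0 : 0 ≤ r := by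
    obtain ⟨z, hz⟩ := h𝒳ne
    have := hr hz
    simp only [Metric.mem_closedBall, dist_zero_right] at this
    exact le_trans (norm_nonneg z) this
  have hnormbd : ∀ x ∈ 𝒳, ‖x‖ ≤ r := by
    intro x hx
    have := hr hx
    simpa [Metric.mem_closedBall, dist_zero_right] using this
  -- F x t = 1 for large t
  have hFone : ∀ (x : X) (t : ℝ), (r + ‖x‖) ^ 2 ≤ t → 1 ≤ F x t := by
    intro x t ht
    rw [hF]
    have hsub : 𝒳 ⊆ {z | ‖z - x‖ ^ 2 ≤ t} := by
      intro z hz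
      have h1 : ‖z - x‖ ≤ r + ‖x‖ :=
        le_trans (norm_sub_le z x) (by linarith [hnormbd z hz])
      have h2 : ‖z - x‖ ^ 2 ≤ (r + ‖x‖) ^ 2 := by
        apply pow_le_pow_left₀ (norm_nonneg _) h1
      exact le_trans h2 ht
    have h1 : (1:ℝ≥0∞) ≤ μ {z | ‖z - x‖ ^ 2 ≤ t} := hsupp ▸ measure_mono hsub
    calc (1:ℝ) = (1:ℝ≥0∞).toReal := by simp
    _ ≤ _ := ENNReal.toReal_mono (measure_ne_top μ _) h1
  -- the set {t | u ≤ F x t}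
  have hSsub : ∀ (x : X) (u : ℝ), 0 < u → ∀ t ∈ {t : ℝ | u ≤ F x t}, (0:ℝ) ≤ t := by
    intro x u hu t ht
    by_contra hneg
    push_neg at hneg
    rw [mem_setOf_eq, hFneg x t hneg] at ht
    linarith
  have hSbdd : ∀ (x : X) (u : ℝ), 0 < u → BddBelow {t : ℝ | u ≤ F x t} := fun x u hu =>
    ⟨0, fun t ht => hSsub x u hu t ht⟩
  have hSne : ∀ (x : X) (u : ℝ), u ≤ 1 → ((r + ‖x‖) ^ 2) ∈ {t : ℝ | u ≤ F x t} := by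
    intro x u hu
    exact le_trans hu (hFone x _ le_rfl)
  have hκ0 : ∀ (x : X) (u : ℝ), 0 < u → 0 ≤ Finv x u := by
    intro x u hu
    rw [hFinv]
    exact Real.sInf_nonneg (hSsub x u hu)
  -- right continuity: u ≤ F x (Finv x u)
  have hrc : ∀ (x : X) (u : ℝ), 0 < u → u ≤ 1 → u ≤ F x (Finv x u) := by
    intro x u hu hu1
    set S := {t : ℝ | u ≤ F x t} with hS
    set a := Finv x u with ha
    have haS : a = sInf S := hFinv x u
    have hmemgt : ∀ t, a < t → t ∈ S := by
      intro t ht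
      rw [haS] at ht
      obtain ⟨s, hsS, hst⟩ := exists_lt_of_csInf_lt ⟨_, hSne x u hu1⟩ ht
      exact le_trans hsS (hFmono x hst.le)
    have hseteq : {z : X | ‖z - x‖ ^ 2 ≤ a} =
        ⋂ n : ℕ, {z : X | ‖z - x‖ ^ 2 ≤ a + 1 / (n + 1)} := by
      ext z
      simp only [mem_setOf_eq, mem_iInter]
      constructor
      · intro hz n
        have : (0:ℝ) < 1 / (n + 1) := by positivity
        linarith
      · intro hz
        by_contra hcon
        push_neg at hcon
        obtain ⟨n, hn⟩ := exists_nat_one_div_lt (by linarith : (0:ℝ) < ‖z - x‖ ^ 2 - a)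
        have := hz n
        push_cast at hn this
        linarith
    have hmeaseq : μ {z : X | ‖z - x‖ ^ 2 ≤ a} =
        ⨅ n : ℕ, μ {z : X | ‖z - x‖ ^ 2 ≤ a + 1 / (n + 1)} := by
      rw [hseteq]
      apply Antitone.measure_iInter
      · intro i j hij
        apply Set.setOf_subset_setOf.mpr
        intro z hz
        have h1 : (1:ℝ) / (j + 1) ≤ 1 / (i + 1) := by
          apply one_div_le_one_div_of_le (by positivity)
          linarith [(Nat.cast_le (α := ℝ)).mpr hij]
        linarith
      · exact fun n => (hAms x _).nullMeasurableSet
      · exact ⟨0, measure_ne_top μ _⟩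
    have hlb : ENNReal.ofReal u ≤ μ {z : X | ‖z - x‖ ^ 2 ≤ a} := by
      rw [hmeaseq]
      apply le_iInf
      intro n
      have hmem : a + 1 / (n + 1) ∈ S := hmemgt _ (lt_add_of_pos_right a (show (0:ℝ) < 1 / ((n:ℝ) + 1) by positivity))
      have := hmem
      rw [hS, mem_setOf_eq, hF] at this
      calc ENNReal.ofReal u ≤ ENNReal.ofReal ((μ {z : X | ‖z - x‖ ^ 2 ≤ a + 1 / (↑n + 1)}).toReal) :=
            ENNReal.ofReal_le_ofReal this
        _ = μ {z : X | ‖z - x‖ ^ 2 ≤ a + 1 / (↑n + 1)} := ENNReal.ofReal_toReal (measure_ne_top μ _)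
    rw [hF]
    calc u = (ENNReal.ofReal u).toReal := by rw [ENNReal.toReal_ofReal hu.le]
      _ ≤ _ := ENNReal.toReal_mono (measure_ne_top μ _) hlb
  -- the key characterization
  have hkey : ∀ (x : X) (u : ℝ), 0 < u → u ≤ 1 → ∀ t : ℝ, (u ≤ F x t ↔ Finv x u ≤ t) := by
    intro x u hu hu1 t
    constructor
    · intro ht
      rw [hFinv]
      exact csInf_le (hSbdd x u hu) ht
    · intro ht
      exact le_trans (hrc x u hu hu1) (hFmono x ht)

  -- joint measurability of F
  have hFmeas : Measurable (fun p : X × ℝ => F p.1 p.2) := by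
    have hs : MeasurableSet {q : (X × ℝ) × X | ‖q.2 - q.1.1‖ ^ 2 ≤ q.1.2} := by
      apply measurableSet_le
      · exact ((continuous_snd.sub (continuous_fst.comp continuous_fst)).norm.pow 2).measurable
      · exact (continuous_snd.comp continuous_fst).measurable
    have h1 : Measurable (fun p : X × ℝ =>
        μ (Prod.mk p ⁻¹' {q : (X × ℝ) × X | ‖q.2 - q.1.1‖ ^ 2 ≤ q.1.2})) :=
      measurable_measure_prodMk_left hs
    have h2 : (fun p : X × ℝ => F p.1 p.2) = fun p =>
        (μ (Prod.mk p ⁻¹' {q : (X × ℝ) × X | ‖q.2 - q.1.1‖ ^ 2 ≤ q.1.2})).toReal := by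
      funext p; rw [hF]; rfl
    rw [h2]; exact h1.ennreal_toReal
  have hFmeas1 : ∀ t : ℝ, Measurable (fun x => F x t) := fun t =>
    hFmeas.comp (measurable_id.prodMk measurable_const)
  -- measurability of x ↦ Finv x m
  have hκmeas : Measurable (fun x => Finv x m) := by
    apply measurable_of_Iic
    intro t
    have hpre : (fun x => Finv x m) ⁻¹' (Iic t) = {x | m ≤ F x t} := by
      ext x
      simp only [mem_preimage, mem_Iic, mem_setOf_eq]
      exact (hkey x m hm0 hm1 t).symm
    rw [hpre]
    exact measurableSet_le measurable_const (hFmeas1 t)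
  -- measurability of d2
  have hH : Measurable (fun p : X × ℝ => if p.2 ∈ Set.Ioc 0 m then Finv p.1 p.2 else 0) := by
    apply measurable_of_Iic
    intro a
    have hset : (fun p : X × ℝ => if p.2 ∈ Set.Ioc 0 m then Finv p.1 p.2 else 0) ⁻¹' (Iic a) =
        {p : X × ℝ | p.2 ∈ Set.Ioc 0 m ∧ p.2 ≤ F p.1 a} ∪
          {p : X × ℝ | p.2 ∉ Set.Ioc 0 m ∧ 0 ≤ a} := by
      ext p
      simp only [mem_preimage, mem_Iic, mem_union, mem_setOf_eq]
      by_cases hp : p.2 ∈ Set.Ioc 0 m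
      · rw [if_pos hp]
        have hiff := hkey p.1 p.2 hp.1 (le_trans hp.2 hm1) a
        constructor
        · intro hle; exact Or.inl ⟨hp, hiff.mpr hle⟩
        · rintro (⟨_, h1⟩ | ⟨h1, _⟩)
          · exact hiff.mp h1
          · exact absurd hp h1
      · rw [if_neg hp]
        constructor
        · intro h0; exact Or.inr ⟨hp, h0⟩
        · rintro (⟨h1, _⟩ | ⟨_, h0⟩)
          · exact absurd h1 hp
          · exact h0
    rw [hset]
    apply MeasurableSet.union
    · exact (measurable_snd measurableSet_Ioc).inter
        (measurableSet_le measurable_snd ((hFmeas1 a).comp measurable_fst))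
    · exact ((measurable_snd measurableSet_Ioc).compl).inter (MeasurableSet.const _)
  have hd2meas : Measurable d2 := by
    have heq : d2 = fun x : X => (1/m) *
        ∫ u, (if u ∈ Set.Ioc 0 m then Finv x u else 0) ∂(volume.restrict (Set.Ioc 0 m)) := by
      funext x
      rw [hd2, intervalIntegral.integral_of_le hm0.le]
      congr 1
      apply setIntegral_congr_fun measurableSet_Ioc
      intro u hu
      simp [hu]
    rw [heq]
    exact measurable_const.mul (hH.stronglyMeasurable.integral_prod_right').measurable
  -- kernel bounds
  have hKcont : Continuous K := hKC2.continuous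
  have hK'eq : K' = deriv K := funext fun t => ((hK' t).deriv).symm
  have hK'cont : Continuous K' := by rw [hK'eq]; exact hKC2.continuous_deriv one_le_two
  have hKcs : HasCompactSupport K := by
    have : IsCompact (tsupport K) := by rw [hKsupp]; exact isCompact_Icc
    exact this
  have hK'cs : HasCompactSupport K' := by rw [hK'eq]; exact hKcs.deriv
  obtain ⟨CK, hCK⟩ := hKcs.exists_bound_of_continuous hKcont
  obtain ⟨CK', hCK'⟩ := hK'cs.exists_bound_of_continuous hK'cont
  have hCK'0 : (0:ℝ) ≤ CK' := le_trans (norm_nonneg (K' 0)) (hCK' 0)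
  have hAmeas : Measurable (fun x : X => 1 / (2 * h) * K ((d2 x - y) / h)) :=
    measurable_const.mul (hKcont.measurable.comp ((hd2meas.sub measurable_const).div_const h))
  have hBmeas : Measurable (fun x : X => 1 / (2 * m * h ^ 2) * K' ((d2 x - y) / h)) :=
    measurable_const.mul (hK'cont.measurable.comp ((hd2meas.sub measurable_const).div_const h))
  have hAint : Integrable (fun x : X => 1 / (2 * h) * K ((d2 x - y) / h)) μ := by
    apply Integrable.mono' (integrable_const (|1 / (2 * h)| * CK)) hAmeas.aestronglyMeasurable
    filter_upwards with x
    rw [norm_mul]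
    exact mul_le_mul (le_refl _) (hCK _) (norm_nonneg _) (abs_nonneg _)
  have hBbd : ∀ x : X, |1 / (2 * m * h ^ 2) * K' ((d2 x - y) / h)| ≤ |1 / (2 * m * h ^ 2)| * CK' := by
    intro x
    rw [abs_mul]
    exact mul_le_mul (le_refl _) (hCK' _) (abs_nonneg _) (abs_nonneg _)

  -- integrability of min functions
  have hint_min : ∀ (a : X) (c : ℝ), 0 ≤ c → Integrable (fun b : X => min (‖b - a‖ ^ 2) c) μ := by
    intro a c hc
    refine Integrable.mono' (integrable_const c) ?_ ?_
    · exact (Continuous.min ((continuous_id.sub continuous_const).norm.pow 2)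
        continuous_const).aestronglyMeasurable
    · filter_upwards with b
      rw [Real.norm_eq_abs, abs_of_nonneg (le_min (by positivity) hc)]
      exact min_le_right _ _
  -- mini Fubini : ∫ min = κ - ∫ F
  have hL2 : ∀ a : X, (∫ b, min (‖b - a‖ ^ 2) (Finv a m) ∂μ) =
      Finv a m - ∫ t in (0:ℝ)..(Finv a m), F a t := by
    intro a
    have hc0 : 0 ≤ Finv a m := hκ0 a m hm0
    haveI : IsFiniteMeasure (volume.restrict (Set.Ioc (0:ℝ) (Finv a m))) := by
      constructor
      rw [Measure.restrict_apply_univ]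
      simp [Real.volume_Ioc]
    have hminid : ∀ b : X, min (‖b - a‖ ^ 2) (Finv a m) =
        Finv a m - ∫ t in Set.Ioc (0:ℝ) (Finv a m), (if ‖b - a‖ ^ 2 ≤ t then (1:ℝ) else 0) := by
      intro b
      rw [show (∫ t in Set.Ioc (0:ℝ) (Finv a m), (if ‖b - a‖ ^ 2 ≤ t then (1:ℝ) else 0)) =
          ∫ t in (0:ℝ)..(Finv a m), (if ‖b - a‖ ^ 2 ≤ t then (1:ℝ) else 0) from
        (intervalIntegral.integral_of_le hc0).symm, aux_ind_int _ _ (by positivity) hc0]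
      ring
    have hswap : (∫ b, (∫ t in Set.Ioc (0:ℝ) (Finv a m),
          (if ‖b - a‖ ^ 2 ≤ t then (1:ℝ) else 0)) ∂μ) =
        ∫ t in Set.Ioc (0:ℝ) (Finv a m), (∫ b, (if ‖b - a‖ ^ 2 ≤ t then (1:ℝ) else 0) ∂μ) := by
      apply integral_integral_swap
      have hms : MeasurableSet {p : X × ℝ | ‖p.1 - a‖ ^ 2 ≤ p.2} :=
        measurableSet_le (((continuous_fst.sub continuous_const).norm.pow 2).measurable)
          measurable_snd
      refine Integrable.mono' (integrable_const (1:ℝ)) ?_ ?_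
      · exact (Measurable.ite hms measurable_const measurable_const).aestronglyMeasurable
      · filter_upwards with p
        by_cases hcase : ‖p.1 - a‖ ^ 2 ≤ p.2 <;> simp [Function.uncurry, hcase]
    have hinner : ∀ t : ℝ, (∫ b, (if ‖b - a‖ ^ 2 ≤ t then (1:ℝ) else 0) ∂μ) = F a t := by
      intro t
      have hieq : (fun b : X => if ‖b - a‖ ^ 2 ≤ t then (1:ℝ) else 0) =
          Set.indicator {z : X | ‖z - a‖ ^ 2 ≤ t} (1 : X → ℝ) := by
        funext b
        simp [Set.indicator_apply, Set.mem_setOf_eq]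
      rw [hieq, integral_indicator_one (hAms a t), Measure.real, ← hF]
    have hGeq : (fun b : X => ∫ t in Set.Ioc (0:ℝ) (Finv a m),
        (if ‖b - a‖ ^ 2 ≤ t then (1:ℝ) else 0)) =
        fun b => Finv a m - min (‖b - a‖ ^ 2) (Finv a m) := by
      funext b; rw [hminid b]; ring
    have hGint : Integrable (fun b : X => ∫ t in Set.Ioc (0:ℝ) (Finv a m),
        (if ‖b - a‖ ^ 2 ≤ t then (1:ℝ) else 0)) μ := by
      rw [hGeq]; exact (integrable_const _).sub (hint_min a _ hc0)
    have hstep1 : (∫ b, min (‖b - a‖ ^ 2) (Finv a m) ∂μ) =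
        Finv a m - ∫ b, (∫ t in Set.Ioc (0:ℝ) (Finv a m),
          (if ‖b - a‖ ^ 2 ≤ t then (1:ℝ) else 0)) ∂μ := by
      have hfeq : (fun b : X => min (‖b - a‖ ^ 2) (Finv a m)) =
          fun b => Finv a m - (∫ t in Set.Ioc (0:ℝ) (Finv a m),
            (if ‖b - a‖ ^ 2 ≤ t then (1:ℝ) else 0)) := by
        funext b; rw [hminid b]
      rw [hfeq, integral_sub (integrable_const _) hGint, integral_const]
      simp
    rw [hstep1, hswap]
    congr 1
    have hfe : (fun t : ℝ => ∫ b, (if ‖b - a‖ ^ 2 ≤ t then (1:ℝ) else 0) ∂μ) =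
        fun t => F a t := funext hinner
    rw [hfe]
    exact (intervalIntegral.integral_of_le hc0).symm
  -- rewriting Ψ
  have hΨeq : ∀ x₁ x₂ : X, Ψ x₁ x₂ = min (‖x₁ - x₂‖ ^ 2) (Finv x₂ m) -
      (Finv x₂ m - ∫ t in (0:ℝ)..(Finv x₂ m), F x₂ t) := by
    intro x₁ x₂; rw [hΨ, hL2]
  have hCmeas : Measurable (fun x : X => ∫ t in (0:ℝ)..(Finv x m), F x t) := by
    have heq2 : (fun x : X => ∫ t in (0:ℝ)..(Finv x m), F x t) = fun x =>
        ∫ t, (if 0 < t ∧ t ≤ Finv x m then F x t else 0) ∂(volume : Measure ℝ) := by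
      funext x
      rw [intervalIntegral.integral_of_le (hκ0 x m hm0), ← integral_indicator measurableSet_Ioc]
      congr 1
      funext t
      simp [Set.indicator_apply, Set.mem_Ioc]
    rw [heq2]
    have hmeas : Measurable (fun p : X × ℝ =>
        if 0 < p.2 ∧ p.2 ≤ Finv p.1 m then F p.1 p.2 else 0) := by
      refine Measurable.ite ?_ hFmeas measurable_const
      exact (measurable_snd measurableSet_Ioi).inter
        (measurableSet_le measurable_snd (hκmeas.comp measurable_fst))
    exact (hmeas.stronglyMeasurable.integral_prod_right').measurable
  have hΨmeas : Measurable (fun p : X × X => Ψ p.1 p.2) := by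
    have heq3 : (fun p : X × X => Ψ p.1 p.2) = fun p =>
        min (‖p.1 - p.2‖ ^ 2) (Finv p.2 m) -
          (Finv p.2 m - ∫ t in (0:ℝ)..(Finv p.2 m), F p.2 t) := by
      funext p; exact hΨeq p.1 p.2
    rw [heq3]
    exact (Measurable.min (((continuous_fst.sub continuous_snd).norm.pow 2).measurable)
      (hκmeas.comp measurable_snd)).sub
      ((hκmeas.comp measurable_snd).sub (hCmeas.comp measurable_snd))
  -- bounds for Ψ
  have hκbd : ∀ x ∈ 𝒳, Finv x m ≤ (2*r)^2 := by
    intro x hx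
    have h1 : Finv x m ≤ (r + ‖x‖)^2 := by
      rw [hFinv]; exact csInf_le (hSbdd x m hm0) (hSne x m hm1)
    have h2 : (r + ‖x‖)^2 ≤ (2*r)^2 := by
      apply pow_le_pow_left₀ (by positivity)
      linarith [hnormbd x hx]
    linarith
  have hCbd : ∀ x : X, 0 ≤ (∫ t in (0:ℝ)..(Finv x m), F x t) ∧
      (∫ t in (0:ℝ)..(Finv x m), F x t) ≤ Finv x m := by
    intro x
    constructor
    · exact intervalIntegral.integral_nonneg (hκ0 x m hm0) (fun t _ => hF0 x t)
    · have hle1 : (∫ t in (0:ℝ)..(Finv x m), F x t) ≤ ∫ t in (0:ℝ)..(Finv x m), (1:ℝ) := by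
        apply intervalIntegral.integral_mono_on (hκ0 x m hm0)
          ((hFmono x).intervalIntegrable) intervalIntegrable_const
        exact fun t _ => hF1 x t
      have hle2 : (∫ t in (0:ℝ)..(Finv x m), (1:ℝ)) = Finv x m := by simp
      linarith
  have hΨbd : ∀ (x₁ x₂ : X), x₂ ∈ 𝒳 → |Ψ x₁ x₂| ≤ (2*r)^2 := by
    intro x₁ x₂ hx₂
    rw [hΨeq]
    obtain ⟨hC0, hC1⟩ := hCbd x₂
    have hκ2 := hκbd x₂ hx₂
    have hκ02 := hκ0 x₂ m hm0
    have hmin0 : 0 ≤ min (‖x₁ - x₂‖ ^ 2) (Finv x₂ m) := le_min (by positivity) hκ02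
    have hmin1 : min (‖x₁ - x₂‖ ^ 2) (Finv x₂ m) ≤ Finv x₂ m := min_le_right _ _
    rw [abs_le]
    constructor <;> linarith
  have hL4 : ∀ a : X, (∫ z, Ψ z a ∂μ) = 0 := by
    intro a
    have heq4 : (fun z : X => Ψ z a) = fun z => min (‖z - a‖ ^ 2) (Finv a m) -
        ∫ w, min (‖w - a‖ ^ 2) (Finv a m) ∂μ := by
      funext z; exact hΨ z a
    rw [heq4, integral_sub (hint_min a _ (hκ0 a m hm0)) (integrable_const _), integral_const]
    simp
  have hφΨ : ∀ a b : X, (∫ t in (0:ℝ)..(Finv a m),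
      (F a t - if ‖b - a‖ ^ 2 ≤ t then (1:ℝ) else 0)) = Ψ b a := by
    intro a b
    rw [intervalIntegral.integral_sub ((hFmono a).intervalIntegrable) (aux_ind_intble _ 0 _),
      aux_ind_int _ _ (by positivity) (hκ0 a m hm0), hΨ, hL2]
    ring

  -- a.e. membership in 𝒳
  have hcompl : μ 𝒳ᶜ = 0 := by
    have hc := measure_compl h𝒳.measurableSet (measure_ne_top μ 𝒳)
    rw [hsupp, measure_univ] at hc
    simpa using hc
  have h_ae : ∀ᵐ z ∂μ, z ∈ 𝒳 := by
    rw [ae_iff]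
    exact hcompl
  -- integrability of the pieces
  have hint3 : ∀ x₁ : X, Integrable
      (fun z : X => 1 / (2 * m * h ^ 2) * K' ((d2 z - y) / h) * Ψ x₁ z) μ := by
    intro x₁
    apply Integrable.mono' (integrable_const ((|1 / (2 * m * h ^ 2)| * CK') * (2*r)^2))
    · exact (hBmeas.mul (hΨmeas.comp (measurable_const.prodMk measurable_id))).aestronglyMeasurable
    · filter_upwards [h_ae] with z hz
      rw [Real.norm_eq_abs, abs_mul]
      exact mul_le_mul (hBbd z) (hΨbd x₁ z hz) (abs_nonneg _)
        (mul_nonneg (abs_nonneg _) hCK'0)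
  have hint2 : ∀ x₁ : X, Integrable
      (fun z : X => 1 / (2 * m * h ^ 2) * K' ((d2 x₁ - y) / h) * Ψ z x₁) μ := by
    intro x₁
    have he : (fun z : X => 1 / (2 * m * h ^ 2) * K' ((d2 x₁ - y) / h) * Ψ z x₁) =
        fun z => (1 / (2 * m * h ^ 2) * K' ((d2 x₁ - y) / h)) *
          (min (‖z - x₁‖ ^ 2) (Finv x₁ m) - ∫ w, min (‖w - x₁‖ ^ 2) (Finv x₁ m) ∂μ) := by
      funext z; rw [hΨ]
    rw [he]
    exact ((hint_min x₁ _ (hκ0 x₁ m hm0)).sub (integrable_const _)).const_mul _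
  -- first projection identity
  have hS1 : ∀ x₁ : X, (∫ z, g x₁ z ∂μ) =
      1 / (2 * h) * K ((d2 x₁ - y) / h) + (∫ z, 1 / (2 * h) * K ((d2 z - y) / h) ∂μ) +
        ∫ z, 1 / (2 * m * h ^ 2) * K' ((d2 z - y) / h) * Ψ x₁ z ∂μ := by
    intro x₁
    have hg' : ∀ z : X, g x₁ z =
        1 / (2 * h) * K ((d2 x₁ - y) / h) + 1 / (2 * h) * K ((d2 z - y) / h) +
          1 / (2 * m * h ^ 2) * K' ((d2 x₁ - y) / h) * Ψ z x₁ +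
          1 / (2 * m * h ^ 2) * K' ((d2 z - y) / h) * Ψ x₁ z := by
      intro z
      have t1 : (∫ t in (0:ℝ)..(Finv x₁ m),
          (F x₁ t - if ‖x₁ - z‖ ^ 2 ≤ t then (1:ℝ) else 0)) = Ψ z x₁ := by
        rw [show ‖x₁ - z‖ = ‖z - x₁‖ from norm_sub_rev x₁ z]
        exact hφΨ x₁ z
      have t2 : (∫ t in (0:ℝ)..(Finv z m),
          (F z t - if ‖x₁ - z‖ ^ 2 ≤ t then (1:ℝ) else 0)) = Ψ x₁ z := hφΨ z x₁
      rw [hg, t1, t2]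
      ring
    simp only [hg']
    have i3 : Integrable (fun _ : X => 1 / (2 * h) * K ((d2 x₁ - y) / h)) μ := integrable_const _
    have i2 : Integrable (fun z : X => 1 / (2 * h) * K ((d2 x₁ - y) / h) +
        1 / (2 * h) * K ((d2 z - y) / h)) μ := i3.add hAint
    have i1 : Integrable (fun z : X => 1 / (2 * h) * K ((d2 x₁ - y) / h) +
        1 / (2 * h) * K ((d2 z - y) / h) +
        1 / (2 * m * h ^ 2) * K' ((d2 x₁ - y) / h) * Ψ z x₁) μ := i2.add (hint2 x₁)
    rw [integral_add i1 (hint3 x₁), integral_add i2 (hint2 x₁), integral_add i3 hAint,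
      integral_const]
    have hz0 : (∫ z, 1 / (2 * m * h ^ 2) * K' ((d2 x₁ - y) / h) * Ψ z x₁ ∂μ) = 0 := by
      rw [integral_const_mul, hL4 x₁, mul_zero]
    rw [hz0]
    simp only [Measure.real, measure_univ, ENNReal.toReal_one, one_smul, add_zero]
  -- the product integrability and Θ
  have hGint : Integrable (fun p : X × X =>
      1 / (2 * m * h ^ 2) * K' ((d2 p.2 - y) / h) * Ψ p.1 p.2) (μ.prod μ) := by
    apply Integrable.mono' (integrable_const ((|1 / (2 * m * h ^ 2)| * CK') * (2*r)^2))
    · exact ((hBmeas.comp measurable_snd).mul hΨmeas).aestronglyMeasurable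
    · have hae2 : ∀ᵐ p ∂(μ.prod μ), p.2 ∈ 𝒳 := by
        rw [ae_iff]
        have hseteq : {p : X × X | ¬ p.2 ∈ 𝒳} = Set.univ ×ˢ 𝒳ᶜ := by
          ext p; simp
        rw [hseteq, Measure.prod_prod, hcompl, mul_zero]
      filter_upwards [hae2] with p hp
      rw [Real.norm_eq_abs, abs_mul]
      exact mul_le_mul (hBbd p.2) (hΨbd p.1 p.2 hp) (abs_nonneg _)
        (mul_nonneg (abs_nonneg _) hCK'0)
  have hDint : Integrable (fun z₁ : X =>
      ∫ z₂, 1 / (2 * m * h ^ 2) * K' ((d2 z₂ - y) / h) * Ψ z₁ z₂ ∂μ) μ :=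
    hGint.integral_prod_left
  have hDzero : (∫ z₁, (∫ z₂, 1 / (2 * m * h ^ 2) * K' ((d2 z₂ - y) / h) * Ψ z₁ z₂ ∂μ) ∂μ)
      = 0 := by
    rw [integral_integral_swap
      (f := fun z₁ z₂ => 1 / (2 * m * h ^ 2) * K' ((d2 z₂ - y) / h) * Ψ z₁ z₂) hGint]
    have hz : ∀ z₂ : X, (∫ z₁, 1 / (2 * m * h ^ 2) * K' ((d2 z₂ - y) / h) * Ψ z₁ z₂ ∂μ) = 0 := by
      intro z₂
      rw [integral_const_mul, hL4 z₂, mul_zero]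
    simp only [hz, integral_zero]
  have hΘval : Θ = (∫ z, 1 / (2 * h) * K ((d2 z - y) / h) ∂μ) +
      (∫ z, 1 / (2 * h) * K ((d2 z - y) / h) ∂μ) := by
    rw [hΘ]
    simp only [hS1]
    have j3 : Integrable (fun _ : X => ∫ z, 1 / (2 * h) * K ((d2 z - y) / h) ∂μ) μ :=
      integrable_const _
    have j2 : Integrable (fun z₁ : X => 1 / (2 * h) * K ((d2 z₁ - y) / h) +
        ∫ z, 1 / (2 * h) * K ((d2 z - y) / h) ∂μ) μ := hAint.add j3
    rw [integral_add j2 hDint, integral_add hAint j3, integral_const, hDzero]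
    simp only [Measure.real, measure_univ, ENNReal.toReal_one, one_smul, add_zero]
  intro x₁
  rw [hS1 x₁, hΘval]
  ring

theorem stmt_16 {d : ℕ} (𝒳 : Set (EuclideanSpace ℝ (Fin d))) (h𝒳 : IsCompact 𝒳)
    (μ : Measure (EuclideanSpace ℝ (Fin d))) [IsProbabilityMeasure μ]
    (hsupp : μ 𝒳 = 1) (m : ℝ) (hm0 : 0 < m) (hm1 : m ≤ 1) (y h : ℝ) (hh : 0 < h)
    (F : EuclideanSpace ℝ (Fin d) → ℝ → ℝ)
    (hF : ∀ x t, F x t = (μ {z | ‖z - x‖ ^ 2 ≤ t}).toReal)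
    (Finv : EuclideanSpace ℝ (Fin d) → ℝ → ℝ)
    (hFinv : ∀ x u, Finv x u = sInf {t : ℝ | u ≤ F x t})
    -- the DTM function with mass parameter m
    (d2 : EuclideanSpace ℝ (Fin d) → ℝ)
    (hd2 : ∀ x, d2 x = (1 / m) * ∫ u in (0:ℝ)..m, Finv x u)
    -- a C² kernel supported on [-1,1], with derivative K'
    (K K' : ℝ → ℝ) (hKC2 : ContDiff ℝ 2 K) (hK' : ∀ t, HasDerivAt K (K' t) t)
    (hKsupp : tsupport K = Set.Icc (-1:ℝ) 1)
    -- the symmetric U-statistic kernel g = g⁽¹⁾ + g⁽²⁾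
    (g : EuclideanSpace ℝ (Fin d) → EuclideanSpace ℝ (Fin d) → ℝ)
    (hg : ∀ x₁ x₂, g x₁ x₂ =
      (1 / (2 * h)) * (K ((d2 x₁ - y) / h) + K ((d2 x₂ - y) / h)) +
      (1 / (2 * m * h ^ 2)) *
        (K' ((d2 x₁ - y) / h) *
            (∫ t in (0:ℝ)..(Finv x₁ m),
              (F x₁ t - if ‖x₁ - x₂‖ ^ 2 ≤ t then (1:ℝ) else 0)) +
          K' ((d2 x₂ - y) / h) *
            (∫ t in (0:ℝ)..(Finv x₂ m),
              (F x₂ t - if ‖x₁ - x₂‖ ^ 2 ≤ t then (1:ℝ) else 0))))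
    (Θ : ℝ) (hΘ : Θ = ∫ z₁, ∫ z₂, g z₁ z₂ ∂μ ∂μ)
    (Ψ : EuclideanSpace ℝ (Fin d) → EuclideanSpace ℝ (Fin d) → ℝ)
    (hΨ : ∀ x₁ x₂, Ψ x₁ x₂ =
      min (‖x₁ - x₂‖ ^ 2) (Finv x₂ m) - ∫ z, min (‖z - x₂‖ ^ 2) (Finv x₂ m) ∂μ) :
    ∀ x₁, (∫ z, g x₁ z ∂μ) - Θ =
      (1 / (2 * h)) * K ((d2 x₁ - y) / h) - Θ / 2 +
        ∫ z, (1 / (2 * m * h ^ 2)) * K' ((d2 z - y) / h) * Ψ x₁ z ∂μ := by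
  exact aux_main 𝒳 h𝒳 μ hsupp m hm0 hm1 y h hh F hF Finv hFinv d2 hd2 K K' hKC2 hK' hKsupp
    g hg Θ hΘ Ψ hΨ
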